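/- arXiv:1301.5702 — 5 statements merged into one kernel-verified Lean document; each statement's English description precedes it below -/
import Mathlib

section
/- Let h : ℂ → ℂ be an entire function and C₀ > 0 a constant such that |h(x+iy)| ≤ C₀·e^{π|y|/2} for all real x, y. Then there is a constant C > 0, depending only on C₀, such that for every real T ≥ 1 and every real r ≠ 0, |(r/T)·h(ir/T)/sinh(πr/T)| ≤ C·e^{−π|r|/(4T)}. -/
open Real

lemma key_ineq (t : ℝ) (ht : 0 < t) :
    t * Real.exp (3 * Real.pi * t / 4) ≤ 100 * Real.sinh (Real.pi * t) := by
  have hpi3 : (3:ℝ) < Real.pi := Real.pi_gt_three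
  rcases le_or_gt t 1 with h1 | h1
  · have hs : Real.pi * t < Real.sinh (Real.pi * t) :=
      Real.self_lt_sinh_iff.mpr (by positivity)
    have he : Real.exp (3 * Real.pi * t / 4) ≤ 81 := by
      have h4 : 3 * Real.pi * t / 4 ≤ 4 := by nlinarith [Real.pi_le_four]
      calc Real.exp (3 * Real.pi * t / 4) ≤ Real.exp 4 := Real.exp_le_exp.mpr h4
        _ = Real.exp 1 ^ 4 := by rw [← Real.exp_nat_mul]; norm_num
        _ ≤ 3 ^ 4 := by
            have h3 : Real.exp 1 ≤ 3 := by
              have := Real.exp_one_lt_d9; linarith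
            exact pow_le_pow_left₀ (Real.exp_pos 1).le h3 4
        _ = 81 := by norm_num
    nlinarith [mul_le_mul_of_nonneg_left he ht.le]
  · have hE : 3 * Real.pi * t / 4 + 1 ≤ Real.exp (3 * Real.pi * t / 4) :=
      Real.add_one_le_exp _
    have hF : Real.pi * t / 4 + 1 ≤ Real.exp (Real.pi * t / 4) :=
      Real.add_one_le_exp _
    have hA : Real.exp (Real.pi * t) =
        Real.exp (3 * Real.pi * t / 4) * Real.exp (Real.pi * t / 4) := by
      rw [← Real.exp_add]; ring_nf
    have hB : Real.exp (-(Real.pi * t)) ≤ 1 := Real.exp_le_one_iff.mpr (by nlinarith)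
    have hS : Real.sinh (Real.pi * t) =
        (Real.exp (Real.pi * t) - Real.exp (-(Real.pi * t))) / 2 := Real.sinh_eq _
    have hEpos := Real.exp_pos (3 * Real.pi * t / 4)
    have hmul : Real.exp (3 * Real.pi * t / 4) * (Real.pi * t / 4 + 1) ≤
        Real.exp (3 * Real.pi * t / 4) * Real.exp (Real.pi * t / 4) :=
      mul_le_mul_of_nonneg_left hF hEpos.le
    nlinarith [hmul, hE, hB, hEpos, mul_pos hEpos ht,
      mul_nonneg (mul_nonneg hEpos.le ht.le) (by linarith : (0:ℝ) ≤ Real.pi - 3)]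

theorem statement7 (C₀ : ℝ) (hC₀ : 0 < C₀) :
    ∃ C : ℝ, 0 < C ∧ ∀ h : ℂ → ℂ, Differentiable ℂ h →
      (∀ x y : ℝ, ‖h (x + y * Complex.I)‖ ≤ C₀ * Real.exp (Real.pi * |y| / 2)) →
      ∀ T : ℝ, 1 ≤ T → ∀ r : ℝ, r ≠ 0 →
      ‖((r : ℂ) / T) * h (Complex.I * r / T) / Complex.sinh (Real.pi * r / T)‖ ≤
        C * Real.exp (-Real.pi * |r| / (4 * T)) := by
  refine ⟨100 * C₀, by positivity, ?_⟩
  intro h _ hbound T hT r hr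
  have hT0 : (0:ℝ) < T := lt_of_lt_of_le one_pos hT
  set t : ℝ := |r| / T with hdef
  have ht : 0 < t := div_pos (abs_pos.mpr hr) hT0
  have h1 : ‖(r:ℂ)/T‖ = t := by
    rw [norm_div, Complex.norm_real, Complex.norm_real, Real.norm_eq_abs, Real.norm_eq_abs, abs_of_pos hT0]
  have h2 : ‖h (Complex.I * r / T)‖ ≤ C₀ * Real.exp (Real.pi * t / 2) := by
    have heq : (Complex.I * r / T) = ((0:ℝ):ℂ) + ((r/T : ℝ):ℂ) * Complex.I := by
      push_cast; ring
    rw [heq]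
    have hb := hbound 0 (r/T)
    have : |r/T| = t := by rw [abs_div, abs_of_pos hT0]
    rwa [this] at hb
  have h3 : ‖Complex.sinh ((Real.pi:ℂ) * r / T)‖ = Real.sinh (Real.pi * t) := by
    rw [show ((Real.pi:ℂ)*r/T) = ((Real.pi*r/T : ℝ):ℂ) by push_cast; ring,
      ← Complex.ofReal_sinh, Complex.norm_real, Real.norm_eq_abs, Real.abs_sinh]
    congr 1
    rw [abs_div, abs_of_pos hT0, abs_mul, abs_of_pos Real.pi_pos, mul_div_assoc]
  have hS : 0 < Real.sinh (Real.pi * t) := Real.sinh_pos_iff.mpr (by positivity)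
  have hexparg : -Real.pi * |r| / (4 * T) = -(Real.pi * t)/4 := by
    rw [hdef]; field_simp
  rw [norm_div, norm_mul, h1, h3, hexparg, div_le_iff₀ hS]
  have e1 : Real.exp (3*Real.pi*t/4) * Real.exp (-(Real.pi*t)/4) = Real.exp (Real.pi*t/2) := by
    rw [← Real.exp_add]; ring_nf
  calc t * ‖h (Complex.I * r / T)‖
      ≤ t * (C₀ * Real.exp (Real.pi*t/2)) := mul_le_mul_of_nonneg_left h2 ht.le
    _ = C₀ * Real.exp (-(Real.pi*t)/4) * (t * Real.exp (3*Real.pi*t/4)) := by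
        rw [← e1]; ring
    _ ≤ C₀ * Real.exp (-(Real.pi*t)/4) * (100 * Real.sinh (Real.pi*t)) :=
        mul_le_mul_of_nonneg_left (key_ineq t ht) (by positivity)
    _ = 100 * C₀ * Real.exp (-(Real.pi*t)/4) * Real.sinh (Real.pi*t) := by ring
end

section
/- Let h : ℂ → ℂ be an entire function and C₀ > 0 a constant such that |h(x+iy)| ≤ C₀·e^{π|y|/2} for all real x, y. There exists a constant C > 0, depending only on C₀, such that for every real T > 1 and every real X with X ≥ T/8, one has ∫_0^∞ (r/T)·|h(ir/T)| / ((4r² + X²)^{1/4} · sinh(πr/T)) dr ≤ C·T^{1/2}. -/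
set_option maxHeartbeats 800000


open MeasureTheory

lemma aux_sinh (w : ℝ) (hw : 0 < w) : w * Real.exp (3 * w) ≤ Real.sinh (4 * w) := by
  have hc : ∀ x : ℝ, Real.exp x / 2 ≤ Real.cosh x := by
    intro x
    rw [Real.cosh_eq]
    have := (Real.exp_pos (-x)).le
    linarith
  have hs2 : w * Real.exp w ≤ Real.sinh (2 * w) := by
    rw [Real.sinh_two_mul]
    have h1 : w ≤ Real.sinh w := (Real.self_le_sinh_iff.2 hw.le)
    have h2 := hc w
    have hep : (0:ℝ) < Real.exp w := Real.exp_pos w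
    nlinarith [Real.sinh_pos_iff.2 hw]
  have h4 : Real.sinh (4 * w) = 2 * Real.sinh (2 * w) * Real.cosh (2 * w) := by
    rw [← Real.sinh_two_mul]; ring_nf
  rw [h4]
  have h2 := hc (2 * w)
  have hep : (0:ℝ) < Real.exp (2 * w) := Real.exp_pos _
  have hsp : (0:ℝ) < Real.sinh (2 * w) := Real.sinh_pos_iff.2 (by linarith)
  have key : 2 * (w * Real.exp w) * (Real.exp (2 * w) / 2) ≤
      2 * Real.sinh (2 * w) * Real.cosh (2 * w) := by
    apply mul_le_mul
    · linarith
    · exact h2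
    · positivity
    · positivity
  calc w * Real.exp (3 * w) = 2 * (w * Real.exp w) * (Real.exp (2 * w) / 2) := by
        rw [show (3:ℝ) * w = w + 2 * w by ring, Real.exp_add]; ring
    _ ≤ _ := key

lemma aux_int (b : ℝ) (hb : 0 < b) :
    (∫ x in Set.Ioi (0:ℝ), Real.exp (-b * x)) = 1 / b := by
  have := integral_comp_mul_left_Ioi (fun y => Real.exp (-y)) 0 hb
  simp only [mul_zero, integral_exp_neg_Ioi, neg_zero, Real.exp_zero, smul_eq_mul,
    mul_one] at this
  simpa using this

theorem statement12 (C₀ : ℝ) (hC₀ : 0 < C₀) :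
    ∃ C : ℝ, 0 < C ∧ ∀ h : ℂ → ℂ, Differentiable ℂ h →
      (∀ x y : ℝ, ‖h (x + y * Complex.I)‖ ≤ C₀ * Real.exp (Real.pi * |y| / 2)) →
      ∀ T X : ℝ, 1 < T → T / 8 ≤ X →
      (∫ r in Set.Ioi (0 : ℝ),
        (r / T) * ‖h (Complex.I * r / T)‖ /
          ((4 * r ^ 2 + X ^ 2) ^ ((1 : ℝ) / 4) * Real.sinh (Real.pi * r / T))) ≤
        C * Real.sqrt T := by
  refine ⟨16 * Real.sqrt 8 * C₀ / Real.pi ^ 2, by positivity, ?_⟩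
  intro h _ hbound T X hT hX
  have hT0 : (0:ℝ) < T := by linarith
  have hX0 : (0:ℝ) < X := by linarith
  have hπ : (0:ℝ) < Real.pi := Real.pi_pos
  have hsX : (0:ℝ) < Real.sqrt X := Real.sqrt_pos.2 hX0
  set b : ℝ := Real.pi / (4 * T) with hbdef
  have hb : 0 < b := by positivity
  set g : ℝ → ℝ := fun r => (4 * C₀ / (Real.pi * Real.sqrt X)) * Real.exp (-b * r) with hg
  have hgint : IntegrableOn g (Set.Ioi (0:ℝ)) :=
    (exp_neg_integrableOn_Ioi 0 hb).const_mul _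
  have hfg : ∀ r ∈ Set.Ioi (0:ℝ),
      (r / T) * ‖h (Complex.I * r / T)‖ /
        ((4 * r ^ 2 + X ^ 2) ^ ((1 : ℝ) / 4) * Real.sinh (Real.pi * r / T)) ≤ g r := by
    intro r hr
    have hr0 : (0:ℝ) < r := hr
    set w : ℝ := Real.pi * r / (4 * T) with hwdef
    have hw : 0 < w := by positivity
    -- bound on |h|
    have hnum : ‖h (Complex.I * r / T)‖ ≤ C₀ * Real.exp (2 * w) := by
      have := hbound 0 (r / T)
      have heq : ((0:ℝ) : ℂ) + (r / T : ℝ) * Complex.I = Complex.I * r / T := by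
        push_cast; ring
      rw [heq] at this
      refine this.trans ?_
      have : |r / T| = r / T := abs_of_pos (by positivity)
      rw [this]
      have : Real.pi * (r / T) / 2 = 2 * w := by rw [hwdef]; ring
      rw [this]
    -- denominator bounds
    have hsinh : w * Real.exp (3 * w) ≤ Real.sinh (Real.pi * r / T) := by
      have : Real.pi * r / T = 4 * w := by rw [hwdef]; ring
      rw [this]; exact aux_sinh w hw
    have hsinhpos : 0 < Real.sinh (Real.pi * r / T) := Real.sinh_pos_iff.2 (by positivity)
    have hrpow : Real.sqrt X ≤ (4 * r ^ 2 + X ^ 2) ^ ((1 : ℝ) / 4) := by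
      have h1 : (X ^ 2 : ℝ) ^ ((1:ℝ)/4) ≤ (4 * r ^ 2 + X ^ 2) ^ ((1:ℝ)/4) := by
        apply Real.rpow_le_rpow (by positivity) (by nlinarith) (by norm_num)
      have h2 : (X ^ 2 : ℝ) ^ ((1:ℝ)/4) = Real.sqrt X := by
        rw [← Real.rpow_natCast X 2, ← Real.rpow_mul hX0.le, Real.sqrt_eq_rpow]
        norm_num
      rw [← h2]; exact h1
    have hdenpos : 0 < (4 * r ^ 2 + X ^ 2) ^ ((1 : ℝ) / 4) * Real.sinh (Real.pi * r / T) := by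
      apply mul_pos _ hsinhpos
      positivity
    -- chain
    have step1 : (r / T) * ‖h (Complex.I * r / T)‖ /
        ((4 * r ^ 2 + X ^ 2) ^ ((1 : ℝ) / 4) * Real.sinh (Real.pi * r / T)) ≤
        (r / T) * (C₀ * Real.exp (2 * w)) / (Real.sqrt X * (w * Real.exp (3 * w))) := by
      apply div_le_div₀ (by positivity)
      · apply mul_le_mul_of_nonneg_left hnum (by positivity)
      · positivity
      · apply mul_le_mul hrpow hsinh (by positivity) (by positivity)
    refine step1.trans ?_
    have hrT : r / T = 4 * w / Real.pi := by
      rw [hwdef]; field_simp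
    rw [hrT]
    simp only [hg]
    have hexp : Real.exp (-b * r) = Real.exp (2 * w) / Real.exp (3 * w) := by
      rw [← Real.exp_sub]
      congr 1
      rw [hwdef, hbdef]; ring
    rw [hexp]
    apply le_of_eq
    have hwne : w ≠ 0 := hw.ne'
    have hXne : Real.sqrt X ≠ 0 := hsX.ne'
    have heexp : Real.exp (3 * w) ≠ 0 := (Real.exp_pos _).ne'
    field_simp
  -- nonnegativity
  have hfnn : ∀ r ∈ Set.Ioi (0:ℝ), 0 ≤ (r / T) * ‖h (Complex.I * r / T)‖ /
      ((4 * r ^ 2 + X ^ 2) ^ ((1 : ℝ) / 4) * Real.sinh (Real.pi * r / T)) := by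
    intro r hr
    have hr0 : (0:ℝ) < r := hr
    have : 0 < Real.sinh (Real.pi * r / T) := Real.sinh_pos_iff.2 (by positivity)
    positivity
  have hmono : (∫ r in Set.Ioi (0 : ℝ),
        (r / T) * ‖h (Complex.I * r / T)‖ /
          ((4 * r ^ 2 + X ^ 2) ^ ((1 : ℝ) / 4) * Real.sinh (Real.pi * r / T))) ≤
      ∫ r in Set.Ioi (0:ℝ), g r := by
    apply integral_mono_of_nonneg
    · filter_upwards [ae_restrict_mem measurableSet_Ioi] with r hr using hfnn r hr
    · exact hgint
    · filter_upwards [ae_restrict_mem measurableSet_Ioi] with r hr using hfg r hr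
  refine hmono.trans ?_
  have hgval : (∫ r in Set.Ioi (0:ℝ), g r) = (4 * C₀ / (Real.pi * Real.sqrt X)) * (1 / b) := by
    rw [hg, MeasureTheory.integral_const_mul, aux_int b hb]
  rw [hgval]
  have h1b : 1 / b = 4 * T / Real.pi := by
    rw [hbdef]; field_simp
  rw [h1b]
  -- now: 16 C₀ T / (π² √X) ≤ 16 √8 C₀ / π² * √T
  have hXT : Real.sqrt T / Real.sqrt 8 ≤ Real.sqrt X := by
    have := Real.sqrt_le_sqrt hX
    rwa [Real.sqrt_div hT0.le] at this
  have hsT : 0 < Real.sqrt T := Real.sqrt_pos.2 hT0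
  have hs8 : 0 < Real.sqrt 8 := by norm_num [Real.sqrt_pos]
  have hTsq : T = Real.sqrt T * Real.sqrt T := (Real.mul_self_sqrt hT0.le).symm
  rw [div_le_iff₀ (by positivity)] at hXT
  calc 4 * C₀ / (Real.pi * Real.sqrt X) * (4 * T / Real.pi)
      = 16 * C₀ * T / (Real.pi ^ 2 * Real.sqrt X) := by field_simp; ring
    _ ≤ 16 * Real.sqrt 8 * C₀ / Real.pi ^ 2 * Real.sqrt T := by
        rw [div_le_iff₀ (by positivity)]
        have : 16 * C₀ * T = 16 * C₀ * (Real.sqrt T * Real.sqrt T) := by rw [← hTsq]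
        rw [this]
        have h2 : Real.sqrt T ≤ Real.sqrt 8 * Real.sqrt X := by linarith
        calc 16 * C₀ * (Real.sqrt T * Real.sqrt T)
            ≤ 16 * C₀ * (Real.sqrt T * (Real.sqrt 8 * Real.sqrt X)) := by
              apply mul_le_mul_of_nonneg_left _ (by positivity)
              exact mul_le_mul_of_nonneg_left h2 hsT.le
          _ = 16 * Real.sqrt 8 * C₀ / Real.pi ^ 2 * Real.sqrt T * (Real.pi ^ 2 * Real.sqrt X) := by
              field_simp
end

section
/- Let h be an admissible weight. There exist constants C > 0 and c > 0, with C depending only on h and c absolute, such that for every odd integer T > 1 and every real X with 0 < X ≤ T, one has T² · Σ_{k=1}^∞ k²·|h(k)|·|J_{2kT}(X)| ≤ C·X·e^{−cT}. -/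
set_option maxHeartbeats 1000000


open MeasureTheory

noncomputable section

/-- An admissible weight: an even entire function with rapid decay in horizontal
strips (up to `e^{π|y|/2}` growth vertically) vanishing to order at least 8 at 0. -/
def IsAdmissible (h : ℂ → ℂ) : Prop :=
  Differentiable ℂ h ∧
  (∀ z : ℂ, h (-z) = h z) ∧
  (∀ A : ℝ, 0 ≤ A → ∃ C : ℝ, 0 < C ∧ ∀ x y : ℝ,
    ‖h (x + y * Complex.I)‖ ≤
      C * (1 + |x| + |y|) ^ (-A) * Real.exp (Real.pi * |y| / 2)) ∧
  (∀ j : ℕ, j ≤ 7 → iteratedDeriv j h 0 = 0)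

/-- The weight `h_T(r) = (r/T) h(ir/T) / sinh(πr/T)`.  (At `r = 0` Lean's junk value
`0` agrees with the value obtained by continuity, since `h(0) = 0` for admissible `h`.) -/
def weightT (h : ℂ → ℂ) (T : ℝ) (r : ℝ) : ℂ :=
  ((r : ℂ) / T) * h (Complex.I * r / T) / Complex.sinh (Real.pi * r / T)

/-- The Bessel function `J_ν(x)` of complex order `ν` at real argument `x > 0`. -/
def besselJC (ν : ℂ) (x : ℝ) : ℂ :=
  ∑' n : ℕ, (-1 : ℂ) ^ n * Complex.exp ((ν + 2 * (n : ℂ)) * (Real.log (x / 2) : ℂ)) /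
    ((n.factorial : ℂ) * Complex.Gamma (ν + (n : ℂ) + 1))

/-- The classical Bessel function of nonnegative integer order. -/
def besselJ (k : ℕ) (x : ℝ) : ℝ :=
  ∑' n : ℕ, (-1 : ℝ) ^ n * (x / 2) ^ (k + 2 * n) / ((n.factorial : ℝ) * ((n + k).factorial : ℝ))

lemma my_exp_eq_tsum (x : ℝ) : Real.exp x = ∑' n : ℕ, x ^ n / n.factorial := by
  rw [Real.exp_eq_exp_ℝ, NormedSpace.exp_eq_tsum_div]

lemma my_factorial_mul_pow_le (m n : ℕ) : m.factorial * m ^ n ≤ (n + m).factorial := by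
  induction n with
  | zero => simp
  | succ n ih =>
      calc m.factorial * m ^ (n + 1) = m.factorial * m ^ n * m := by ring
        _ ≤ (n + m).factorial * (n + m + 1) := Nat.mul_le_mul ih (by omega)
        _ = (n + 1 + m).factorial := by
            rw [show n + 1 + m = (n + m) + 1 by omega, Nat.factorial_succ]; ring

lemma my_pow_self_le (m : ℕ) : (m : ℝ) ^ m ≤ m.factorial * Real.exp m := by
  have hs := Real.summable_pow_div_factorial (m : ℝ)
  have h1 : (m : ℝ) ^ m / m.factorial ≤ Real.exp m := by
    rw [my_exp_eq_tsum]
    exact Summable.le_tsum hs m (fun j _ => by positivity)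
  have hf : (0 : ℝ) < m.factorial := by exact_mod_cast m.factorial_pos
  calc (m : ℝ) ^ m = (m : ℝ) ^ m / m.factorial * m.factorial := by field_simp
    _ ≤ Real.exp m * m.factorial := mul_le_mul_of_nonneg_right h1 hf.le
    _ = m.factorial * Real.exp m := by ring

lemma my_quarter_sq_le_exp (x : ℝ) (hx : 0 ≤ x) : x ^ 2 / 4 ≤ Real.exp x := by
  have h := Real.add_one_le_exp (x / 2)
  have h2 : Real.exp x = Real.exp (x / 2) * Real.exp (x / 2) := by
    rw [← Real.exp_add]; ring_nf
  nlinarith [Real.exp_pos (x / 2), sq_nonneg (x / 2), hx]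

lemma my_exp_two_le : Real.exp 2 ≤ 8 := by
  have h1 : Real.exp 1 < 2.7182818286 := Real.exp_one_lt_d9
  have h2 : Real.exp 2 = Real.exp 1 * Real.exp 1 := by rw [← Real.exp_add]; norm_num
  nlinarith [Real.exp_pos 1]

lemma my_exp_218_le : Real.exp (21 / 8) ≤ 16 := by
  have h8 : Real.exp (21 / 8) ^ (8 : ℕ) = Real.exp 21 := by
    rw [← Real.exp_nat_mul]; norm_num
  have h21 : Real.exp 21 = Real.exp 1 ^ (21 : ℕ) := by
    rw [← Real.exp_nat_mul]; norm_num
  have h1 : Real.exp 1 < 2.7182818286 := Real.exp_one_lt_d9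
  have hlt : Real.exp 21 < 4294967296 := by
    rw [h21]
    calc Real.exp 1 ^ (21 : ℕ) ≤ 2.7182818286 ^ (21 : ℕ) :=
          pow_le_pow_left₀ (Real.exp_pos 1).le h1.le 21
      _ < 4294967296 := by norm_num
  have hp : Real.exp (21 / 8) ^ (8 : ℕ) < 16 ^ (8 : ℕ) := by
    rw [h8]; norm_num; linarith
  exact (lt_of_pow_lt_pow_left₀ 8 (by norm_num) hp).le

lemma my_besselJ_bound (m : ℕ) (hm : 1 ≤ m) (X : ℝ) (hX : 0 < X) :
    |besselJ m X| ≤ (X / 2) ^ m / m.factorial * Real.exp (X ^ 2 / (4 * m)) := by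
  have hmR : (0 : ℝ) < m := by exact_mod_cast hm
  set a : ℕ → ℝ := fun n =>
    (-1 : ℝ) ^ n * (X / 2) ^ (m + 2 * n) / ((n.factorial : ℝ) * ((n + m).factorial : ℝ)) with ha
  set g : ℕ → ℝ := fun n =>
    (X / 2) ^ m / m.factorial * ((X ^ 2 / (4 * m)) ^ n / n.factorial) with hg
  have hbound : ∀ n, |a n| ≤ g n := by
    intro n
    have hfacpos : (0 : ℝ) < (n.factorial : ℝ) * ((n + m).factorial : ℝ) := by positivity
    have habs : |a n| = (X / 2) ^ (m + 2 * n) / ((n.factorial : ℝ) * ((n + m).factorial : ℝ)) := by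
      rw [ha]
      rw [abs_div, abs_mul, abs_pow, abs_neg, abs_one, one_pow, one_mul,
        abs_of_nonneg (by positivity : (0:ℝ) ≤ (X / 2) ^ (m + 2 * n)),
        abs_of_nonneg hfacpos.le]
    rw [habs]
    have hfac : (m.factorial : ℝ) * (m : ℝ) ^ n ≤ ((n + m).factorial : ℝ) := by
      exact_mod_cast my_factorial_mul_pow_le m n
    calc (X / 2) ^ (m + 2 * n) / ((n.factorial : ℝ) * ((n + m).factorial : ℝ))
        ≤ (X / 2) ^ (m + 2 * n) / ((n.factorial : ℝ) * ((m.factorial : ℝ) * (m : ℝ) ^ n)) := by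
          apply div_le_div_of_nonneg_left (by positivity) (by positivity)
          exact mul_le_mul_of_nonneg_left hfac (by positivity)
      _ = g n := by
          rw [hg, pow_add, pow_mul]
          have : ((X / 2) ^ 2) = X ^ 2 / 4 := by ring
          rw [this]
          have hm0 : (m : ℝ) ≠ 0 := hmR.ne'
          field_simp
          ring_nf
          rw [mul_assoc (X ^ (n * 2)), ← mul_pow, mul_inv_cancel₀ hm0, one_pow, mul_one]
  have hg_sum : Summable g := (Real.summable_pow_div_factorial _).mul_left _
  have ha_abs : Summable (fun n => |a n|) :=
    Summable.of_nonneg_of_le (fun n => abs_nonneg _) hbound hg_sum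
  have h1 : |besselJ m X| ≤ ∑' n, |a n| := by
    rw [besselJ]
    simpa [Real.norm_eq_abs] using
      norm_tsum_le_tsum_norm (f := a) (by simpa [Real.norm_eq_abs] using ha_abs)
  have h2 : (∑' n, |a n|) ≤ ∑' n, g n := Summable.tsum_le_tsum hbound ha_abs hg_sum
  have h3 : (∑' n, g n) = (X / 2) ^ m / m.factorial * Real.exp (X ^ 2 / (4 * m)) := by
    rw [hg, tsum_mul_left, my_exp_eq_tsum]
  linarith

theorem statement14 :
    ∃ c : ℝ, 0 < c ∧ ∀ h : ℂ → ℂ, IsAdmissible h →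
      ∃ C : ℝ, 0 < C ∧ ∀ T : ℕ, Odd T → 1 < T → ∀ X : ℝ, 0 < X → X ≤ (T : ℝ) →
      (T : ℝ) ^ 2 * ∑' k : ℕ, ((k : ℝ) + 1) ^ 2 * ‖h (((k : ℝ) + 1 : ℝ))‖ *
        |besselJ (2 * (k + 1) * T) X| ≤ C * X * Real.exp (-c * T) := by
  refine ⟨1/8, by norm_num, ?_⟩
  intro h hadm
  obtain ⟨-, -, hdecay, -⟩ := hadm
  obtain ⟨C₄, hC₄pos, hC₄⟩ := hdecay 4 (by norm_num)
  refine ⟨116 * C₄, by positivity, ?_⟩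
  intro T hTodd hT1 X hX hXT
  have hT3 : 3 ≤ T := by rcases hTodd with ⟨j, hj⟩; omega
  have hT3R : (3 : ℝ) ≤ (T : ℝ) := by exact_mod_cast hT3
  have hTR : (0 : ℝ) < (T : ℝ) := by linarith
  set q : ℝ := (Real.exp 2 / 16) ^ T with hqdef
  have hq0 : (0 : ℝ) ≤ q := by positivity
  have he2 : Real.exp 2 ≤ 8 := my_exp_two_le
  have hq18 : q ≤ 1/8 := by
    calc q ≤ (1/2 : ℝ) ^ T := pow_le_pow_left₀ (by positivity) (by linarith) T
      _ ≤ (1/2 : ℝ) ^ 3 := pow_le_pow_of_le_one (by norm_num) (by norm_num) hT3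
      _ = 1/8 := by norm_num
  have hq1 : q < 1 := by linarith
  set c0 : ℝ := C₄ * (2 * X * Real.exp ((T : ℝ) / 8)) with hc0
  set f : ℕ → ℝ := fun k => ((k : ℝ) + 1) ^ 2 * ‖h (((k : ℝ) + 1 : ℝ))‖ *
    |besselJ (2 * (k + 1) * T) X| with hf
  have hf_le : ∀ k : ℕ, f k ≤ c0 * q ^ (k + 1) := by
    intro k
    set m : ℕ := 2 * (k + 1) * T with hmdef
    have hk0 : (0 : ℝ) ≤ (k : ℝ) := Nat.cast_nonneg k
    have hm1 : 1 ≤ m := by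
      rw [hmdef]
      calc 1 = 1 * 1 := rfl
        _ ≤ 2 * (k + 1) * T := Nat.mul_le_mul (by omega) (by omega)
    have hmR : ((m : ℕ) : ℝ) = 2 * ((k : ℝ) + 1) * (T : ℝ) := by push_cast [hmdef]; ring
    have hmpos : (0 : ℝ) < (m : ℝ) := by rw [hmR]; positivity
    have h2T : 2 * (T : ℝ) ≤ (m : ℝ) := by rw [hmR]; nlinarith
    have hXm : X ≤ (m : ℝ) / 2 := by linarith
    -- bound on h(k+1)
    have hhb' : ‖h (((k : ℝ) + 1 : ℝ))‖ ≤ C₄ * (((k : ℝ) + 2) ^ (4 : ℕ))⁻¹ := by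
      have hb0 := hC₄ ((k : ℝ) + 1) 0
      have e1 : ((((k : ℝ) + 1) : ℝ) : ℂ) + ((0 : ℝ) : ℂ) * Complex.I
          = ((((k : ℝ) + 1) : ℝ) : ℂ) := by simp
      rw [e1] at hb0
      have e2 : (1 + |(k : ℝ) + 1| + |(0 : ℝ)|) = (k : ℝ) + 2 := by
        rw [abs_of_nonneg (by positivity), abs_zero]; ring
      rw [e2] at hb0
      have e3 : ((k : ℝ) + 2) ^ (-(4 : ℝ)) = (((k : ℝ) + 2) ^ (4 : ℕ))⁻¹ := by
        rw [Real.rpow_neg (by positivity), show (4 : ℝ) = ((4 : ℕ) : ℝ) by norm_num,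
          Real.rpow_natCast]
      rw [e3] at hb0
      simpa using hb0
    have hk1 : ((k : ℝ) + 1) ^ 2 * (((k : ℝ) + 2) ^ (4 : ℕ))⁻¹ ≤ 1 := by
      have hp : (0 : ℝ) < ((k : ℝ) + 2) ^ (4 : ℕ) := by positivity
      have hle : ((k : ℝ) + 1) ^ 2 ≤ ((k : ℝ) + 2) ^ (4 : ℕ) := by
        have e : ((k : ℝ) + 2) ^ (4 : ℕ) = (((k : ℝ) + 2) ^ 2) ^ 2 := by ring
        nlinarith [sq_nonneg ((k : ℝ) + 2), sq_nonneg (((k : ℝ) + 2) ^ 2 - ((k : ℝ) + 2))]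
      calc ((k : ℝ) + 1) ^ 2 * (((k : ℝ) + 2) ^ (4 : ℕ))⁻¹
          ≤ ((k : ℝ) + 2) ^ (4 : ℕ) * (((k : ℝ) + 2) ^ (4 : ℕ))⁻¹ :=
            mul_le_mul_of_nonneg_right hle (by positivity)
        _ = 1 := mul_inv_cancel₀ hp.ne'
    -- Bessel bound
    have hb := my_besselJ_bound m hm1 X hX
    have hfacR : (0 : ℝ) < (m.factorial : ℝ) := by exact_mod_cast m.factorial_pos
    have hmsub : m - 1 + 1 = m := Nat.succ_pred_eq_of_pos hm1
    have e1 : (X / 2) ^ m = (X / 2) * (X / 2) ^ (m - 1) := by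
      conv_lhs => rw [← hmsub]
      rw [pow_succ]; ring
    have e2 : (X / 2) ^ (m - 1) ≤ ((m : ℝ) / 4) ^ (m - 1) :=
      pow_le_pow_left₀ (by positivity) (by linarith) _
    have e5 : (m : ℝ) ^ (m - 1) ≤ (m : ℝ) ^ m :=
      pow_le_pow_right₀ (by exact_mod_cast hm1) (by omega)
    have e6 : (4 : ℝ) ^ m = 4 ^ (m - 1) * 4 := by
      conv_lhs => rw [← hmsub]
      rw [pow_succ]
    have e7 : (m : ℝ) ^ (m - 1) ≤ (m.factorial : ℝ) * Real.exp m :=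
      e5.trans (my_pow_self_le m)
    have key : (X / 2) ^ m / m.factorial ≤ 2 * X * (Real.exp m / 4 ^ m) := by
      rw [e1]
      have s1 : X / 2 * (X / 2) ^ (m - 1) / m.factorial
          ≤ X / 2 * ((m : ℝ) / 4) ^ (m - 1) / m.factorial := by
        apply div_le_div_of_nonneg_right _ hfacR.le
        exact mul_le_mul_of_nonneg_left e2 (by positivity)
      have s2 : X / 2 * ((m : ℝ) / 4) ^ (m - 1) / m.factorial
          = X / 2 * ((m : ℝ) ^ (m - 1) / (4 ^ (m - 1) * m.factorial)) := by
        rw [div_pow]; field_simp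
      have s3 : X / 2 * ((m : ℝ) ^ (m - 1) / (4 ^ (m - 1) * m.factorial))
          ≤ X / 2 * (((m.factorial : ℝ) * Real.exp m) / (4 ^ (m - 1) * m.factorial)) := by
        apply mul_le_mul_of_nonneg_left _ (by positivity)
        exact div_le_div_of_nonneg_right e7 (by positivity)
      have s4 : X / 2 * (((m.factorial : ℝ) * Real.exp m) / (4 ^ (m - 1) * m.factorial))
          = 2 * X * (Real.exp m / 4 ^ m) := by
        rw [e6]; field_simp; ring
      linarith
    have hq_eq : Real.exp m / 4 ^ m = q ^ (k + 1) := by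
      have eA : Real.exp (m : ℝ) = Real.exp 2 ^ ((k + 1) * T) := by
        rw [← Real.exp_nat_mul]
        congr 1
        push_cast [hmdef]; ring
      have eB : (4 : ℝ) ^ m = (16 : ℝ) ^ ((k + 1) * T) := by
        rw [hmdef, show 2 * (k + 1) * T = 2 * ((k + 1) * T) by ring, pow_mul]
        norm_num
      rw [eA, eB, ← div_pow, hqdef, ← pow_mul, mul_comm T (k + 1)]
    have hexp : X ^ 2 / (4 * m) ≤ (T : ℝ) / 8 := by
      rw [div_le_div_iff₀ (by positivity) (by norm_num)]
      nlinarith [mul_le_mul_of_nonneg_left h2T hTR.le, mul_le_mul_of_nonneg_left hXT hX.le,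
        mul_le_mul_of_nonneg_right hXT hTR.le]
    have hJ : |besselJ m X| ≤ 2 * X * Real.exp ((T : ℝ) / 8) * q ^ (k + 1) := by
      calc |besselJ m X| ≤ (X / 2) ^ m / m.factorial * Real.exp (X ^ 2 / (4 * m)) := hb
        _ ≤ 2 * X * (Real.exp m / 4 ^ m) * Real.exp ((T : ℝ) / 8) := by
            apply mul_le_mul key (Real.exp_le_exp.mpr hexp) (Real.exp_pos _).le (by positivity)
        _ = 2 * X * Real.exp ((T : ℝ) / 8) * q ^ (k + 1) := by rw [hq_eq]; ring
    calc f k ≤ ((k : ℝ) + 1) ^ 2 * (C₄ * (((k : ℝ) + 2) ^ (4 : ℕ))⁻¹) *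
          (2 * X * Real.exp ((T : ℝ) / 8) * q ^ (k + 1)) := by
          apply mul_le_mul (mul_le_mul_of_nonneg_left hhb' (by positivity)) hJ
            (abs_nonneg _) (by positivity)
      _ = C₄ * (((k : ℝ) + 1) ^ 2 * (((k : ℝ) + 2) ^ (4 : ℕ))⁻¹) *
          (2 * X * Real.exp ((T : ℝ) / 8)) * q ^ (k + 1) := by ring
      _ ≤ C₄ * 1 * (2 * X * Real.exp ((T : ℝ) / 8)) * q ^ (k + 1) := by
          apply mul_le_mul_of_nonneg_right _ (by positivity)
          apply mul_le_mul_of_nonneg_right _ (by positivity)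
          exact mul_le_mul_of_nonneg_left hk1 hC₄pos.le
      _ = c0 * q ^ (k + 1) := by rw [hc0]; ring
  -- summation
  have hgeo : Summable (fun k : ℕ => q ^ (k + 1)) := by
    simpa [pow_succ] using (summable_geometric_of_lt_one hq0 hq1).mul_right q
  have hG_sum : Summable (fun k : ℕ => c0 * q ^ (k + 1)) := hgeo.mul_left c0
  have hf_nonneg : ∀ k, 0 ≤ f k := fun k => by
    rw [hf]
    positivity
  have hf_sum : Summable f := Summable.of_nonneg_of_le hf_nonneg hf_le hG_sum
  have hts : (∑' k, f k) ≤ c0 * (q * (1 - q)⁻¹) := by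
    calc (∑' k, f k) ≤ ∑' k, c0 * q ^ (k + 1) := Summable.tsum_le_tsum hf_le hf_sum hG_sum
      _ = c0 * ∑' k : ℕ, q ^ (k + 1) := tsum_mul_left
      _ = c0 * ((1 - q)⁻¹ * q) := by
          congr 1
          calc (∑' k : ℕ, q ^ (k + 1)) = ∑' k : ℕ, q ^ k * q := by
                refine tsum_congr fun k => ?_
                rw [pow_succ]
            _ = (∑' k : ℕ, q ^ k) * q := tsum_mul_right
            _ = (1 - q)⁻¹ * q := by rw [tsum_geometric_of_lt_one hq0 hq1]
      _ = c0 * (q * (1 - q)⁻¹) := by ring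
  have hinv : (1 - q)⁻¹ ≤ 2 := by
    have h78 : (1 / 2 : ℝ) ≤ 1 - q := by linarith
    calc (1 - q)⁻¹ ≤ ((1 : ℝ) / 2)⁻¹ := inv_anti₀ (by norm_num) h78
      _ = 2 := by norm_num
  have hts2 : (∑' k, f k) ≤ c0 * (q * 2) := by
    refine hts.trans ?_
    apply mul_le_mul_of_nonneg_left _ (by positivity)
    exact mul_le_mul_of_nonneg_left hinv hq0
  -- final numeric estimate
  have hnum : (T : ℝ) ^ 2 * Real.exp ((T : ℝ) / 8) * q ≤ 29 * Real.exp (-(1/8) * T) := by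
    have hTsq : (T : ℝ) ^ 2 ≤ 29 * Real.exp (3 * (T : ℝ) / 8) := by
      have hq4 := my_quarter_sq_le_exp (3 * (T : ℝ) / 8) (by positivity)
      nlinarith [Real.exp_pos (3 * (T : ℝ) / 8)]
    have hqe : q = Real.exp (2 * (T : ℝ)) / 16 ^ T := by
      rw [hqdef, div_pow, show (2 : ℝ) * (T : ℝ) = (T : ℕ) * (2 : ℝ) by push_cast; ring,
        Real.exp_nat_mul]
    have h16 : Real.exp ((21 / 8 : ℝ) * T) ≤ (16 : ℝ) ^ T := by
      calc Real.exp ((21 / 8 : ℝ) * T) = Real.exp ((T : ℕ) * (21 / 8 : ℝ)) := by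
            rw [mul_comm]
        _ = Real.exp (21 / 8) ^ T := Real.exp_nat_mul _ T
        _ ≤ 16 ^ T := pow_le_pow_left₀ (Real.exp_pos _).le my_exp_218_le T
    have h16pos : (0 : ℝ) < (16 : ℝ) ^ T := by positivity
    have comb : Real.exp (3 * (T : ℝ) / 8) * (Real.exp ((T : ℝ) / 8) * Real.exp (2 * (T : ℝ)))
        = Real.exp ((21 / 8 : ℝ) * T) * Real.exp (-(1/8) * T) := by
      rw [← Real.exp_add, ← Real.exp_add, ← Real.exp_add]
      congr 1
      ring
    calc (T : ℝ) ^ 2 * Real.exp ((T : ℝ) / 8) * q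
        = (T : ℝ) ^ 2 * (Real.exp ((T : ℝ) / 8) * Real.exp (2 * (T : ℝ))) / 16 ^ T := by
          rw [hqe]; ring
      _ ≤ 29 * Real.exp (3 * (T : ℝ) / 8) * (Real.exp ((T : ℝ) / 8) * Real.exp (2 * (T : ℝ)))
          / 16 ^ T := by
          apply div_le_div_of_nonneg_right _ h16pos.le
          exact mul_le_mul_of_nonneg_right hTsq (by positivity)
      _ = 29 * (Real.exp ((21 / 8 : ℝ) * T) * Real.exp (-(1/8) * T)) / 16 ^ T := by
          rw [mul_assoc, comb]
      _ ≤ 29 * ((16 : ℝ) ^ T * Real.exp (-(1/8) * T)) / 16 ^ T := by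
          apply div_le_div_of_nonneg_right _ h16pos.le
          apply mul_le_mul_of_nonneg_left _ (by norm_num)
          exact mul_le_mul_of_nonneg_right h16 (Real.exp_pos _).le
      _ = 29 * Real.exp (-(1/8) * T) := by field_simp
  calc (T : ℝ) ^ 2 * ∑' k, f k ≤ (T : ℝ) ^ 2 * (c0 * (q * 2)) :=
        mul_le_mul_of_nonneg_left hts2 (by positivity)
    _ = 4 * C₄ * X * ((T : ℝ) ^ 2 * Real.exp ((T : ℝ) / 8) * q) := by rw [hc0]; ring
    _ ≤ 4 * C₄ * X * (29 * Real.exp (-(1/8) * T)) :=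
        mul_le_mul_of_nonneg_left hnum (by positivity)
    _ = 116 * C₄ * X * Real.exp (-(1/8) * T) := by ring

end
end

section
/- Let h be an admissible weight. For every odd integer T > 1 and every real X > 0, T · Σ_{k=0}^∞ (−1)^k J_{2k+1}(X) · ((2k+1)/(2T))²·h((2k+1)/(2T)) / sin((2k+1)π/(2T)) = T · Σ_{α=−(T−1)/2}^{(T−1)/2} Σ_{k ≥ 0, 2T ∤ k} e(kα/(2T)) · J_k(X) · (k/(2T))²·h(k/(2T)), where the inner sum on the right runs over all integers k ≥ 0 not divisible by 2T, and all series converge absolutely. -/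
open MeasureTheory

noncomputable section

lemma sq_le_four_pow (k : ℕ) : ((k:ℝ)+1)^2 ≤ 4^k := by
  induction k with
  | zero => norm_num
  | succ k ih =>
    have hk : (0:ℝ) ≤ k := Nat.cast_nonneg k
    push_cast
    calc ((k:ℝ)+1+1)^2 ≤ 4*((k:ℝ)+1)^2 := by nlinarith
    _ ≤ 4*4^k := by linarith
    _ = 4^(k+1) := by ring

lemma summable_aux {y : ℝ} (hy : 0 ≤ y) :
    Summable (fun k : ℕ => ((k:ℝ)+1)^2 * y^k / k.factorial) := by
  refine Summable.of_nonneg_of_le (fun k => by positivity) (fun k => ?_)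
    (Real.summable_pow_div_factorial (4*y))
  rw [mul_pow]
  gcongr
  exact sq_le_four_pow k


lemma besselJ_bound (k : ℕ) {X : ℝ} (hX : 0 ≤ X) :
    |besselJ k X| ≤ (X/2)^k / k.factorial * ∑' n : ℕ, ((X/2)^2)^n / n.factorial := by
  have hx2 : (0:ℝ) ≤ X/2 := by linarith
  set B := fun n : ℕ => (X/2)^k / k.factorial * (((X/2)^2)^n / n.factorial) with hB
  have hBsum : Summable B := (Real.summable_pow_div_factorial ((X/2)^2)).mul_left _
  have hle : ∀ n : ℕ, ‖(-1:ℝ)^n * (X/2)^(k+2*n) / ((n.factorial : ℝ) * ((n+k).factorial : ℝ))‖ ≤ B n := by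
    intro n
    have h1 : ‖(-1:ℝ)^n * (X/2)^(k+2*n) / ((n.factorial : ℝ) * ((n+k).factorial : ℝ))‖
        = (X/2)^(k+2*n) / ((n.factorial : ℝ) * ((n+k).factorial : ℝ)) := by
      rw [Real.norm_eq_abs, abs_div, abs_mul, abs_pow, abs_neg, abs_one, one_pow, one_mul,
        abs_of_nonneg (pow_nonneg hx2 _), abs_of_nonneg (by positivity)]
    rw [h1, hB]
    have h2 : (X/2)^(k+2*n) = (X/2)^k * ((X/2)^2)^n := by
      rw [← pow_mul, ← pow_add]
    simp only []
    rw [h2, div_mul_div_comm]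
    rw [div_le_div_iff₀ (by positivity) (by positivity)]
    have h3 : (k.factorial : ℝ) ≤ ((n+k).factorial : ℝ) := by
      exact_mod_cast Nat.factorial_le (Nat.le_add_left k n)
    have h4 : (0:ℝ) ≤ (X/2)^k * ((X/2)^2)^n := by positivity
    have h5 : (0:ℝ) < n.factorial := by positivity
    nlinarith [mul_le_mul_of_nonneg_left h3 (mul_nonneg h4 h5.le)]
  have hf : Summable (fun n => ‖(-1:ℝ)^n * (X/2)^(k+2*n) / ((n.factorial : ℝ) * ((n+k).factorial : ℝ))‖) :=
    Summable.of_nonneg_of_le (fun n => norm_nonneg _) hle hBsum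
  calc |besselJ k X| ≤ ∑' n, ‖(-1:ℝ)^n * (X/2)^(k+2*n) / ((n.factorial : ℝ) * ((n+k).factorial : ℝ))‖ := by
        rw [← Real.norm_eq_abs]; exact norm_tsum_le_tsum_norm hf
    _ ≤ ∑' n, B n := Summable.tsum_le_tsum hle hf hBsum
    _ = (X/2)^k / k.factorial * ∑' n : ℕ, ((X/2)^2)^n / n.factorial := tsum_mul_left


open Real in
lemma sin_mono_aux {a b : ℝ} (ha : 0 ≤ a) (hab : a ≤ b) (hb : b ≤ π/2) :
    Real.sin a ≤ Real.sin b := by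
  have hpi := Real.pi_pos
  exact Real.strictMonoOn_sin.monotoneOn ⟨by linarith, by linarith⟩ ⟨by linarith, by linarith⟩ hab

lemma sin_ge {T : ℕ} (hT : 0 < T) {m : ℕ} (hm : ¬ (2*T ∣ m)) :
    Real.sin (Real.pi / (2*T)) ≤ |Real.sin ((m:ℝ) * Real.pi / (2*T))| := by
  have hpi := Real.pi_pos
  have hT' : (0:ℝ) < T := by exact_mod_cast hT
  set r := m % (2*T) with hrdef
  have hr1 : 1 ≤ r := by
    rcases Nat.eq_zero_or_pos r with h0 | h
    · exact absurd (Nat.dvd_of_mod_eq_zero h0) hm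
    · exact h
  have hr2 : r < 2*T := Nat.mod_lt _ (by omega)
  have hkey : ∀ s : ℕ, 1 ≤ s → s < 2*T →
      Real.sin (Real.pi/(2*T)) ≤ Real.sin ((s:ℝ) * Real.pi / (2*T)) := by
    intro s hs1 hs2
    rcases le_or_gt s T with hsT | hsT
    · apply sin_mono_aux (by positivity)
      · have h1 : (1:ℝ) ≤ s := by exact_mod_cast hs1
        rw [div_le_div_iff₀ (by positivity) (by positivity)]
        nlinarith [mul_le_mul_of_nonneg_right h1 (le_of_lt (mul_pos hpi (by positivity : (0:ℝ) < 2*(T:ℝ))))]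
      · have : (s:ℝ) ≤ T := by exact_mod_cast hsT
        rw [div_le_div_iff₀ (by positivity) (by norm_num)]
        nlinarith
    · have hsub : (s:ℝ) * Real.pi / (2*T) = Real.pi - ((2*T - s : ℕ):ℝ) * Real.pi / (2*T) := by
        have h1 : ((2*T - s : ℕ):ℝ) = 2*T - s := by
          push_cast [Nat.cast_sub (le_of_lt hs2)] ; ring
        rw [h1]; field_simp; ring
      rw [hsub, Real.sin_pi_sub]
      apply sin_mono_aux (by positivity)
      · rw [div_le_div_iff₀ (by positivity) (by positivity)]
        have h1 : (1:ℝ) ≤ ((2*T - s : ℕ):ℝ) := by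
          have : 1 ≤ 2*T - s := by omega
          exact_mod_cast this
        nlinarith [mul_le_mul_of_nonneg_right h1 (le_of_lt (mul_pos hpi (by positivity : (0:ℝ) < 2*(T:ℝ))))]
      · have : ((2*T - s:ℕ):ℝ) ≤ T := by
          have : 2*T - s ≤ T := by omega
          exact_mod_cast this
        rw [div_le_div_iff₀ (by positivity) (by norm_num)]
        nlinarith
  have hdecomp : (m:ℝ) * Real.pi / (2*T) = (m / (2*T) : ℕ) * Real.pi + (r:ℝ) * Real.pi / (2*T) := by
    have h := Nat.div_add_mod m (2*T)
    have h2 : (m:ℝ) = (2*T) * (m / (2*T) : ℕ) + r := by exact_mod_cast h.symm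
    rw [h2]; field_simp
  rw [hdecomp, Real.sin_add, Real.sin_nat_mul_pi, zero_mul, zero_add, abs_mul]
  have hcos : |Real.cos ((m / (2*T) : ℕ) * Real.pi)| = 1 := by
    have := Real.cos_nat_mul_pi_sub 0 (m / (2*T))
    simp at this
    rw [this, abs_pow, abs_neg, abs_one, one_pow]
  rw [hcos, one_mul]
  have hpos : 0 < Real.sin ((r:ℝ) * Real.pi / (2*T)) := by
    apply Real.sin_pos_of_pos_of_lt_pi
    · have : (1:ℝ) ≤ r := by exact_mod_cast hr1
      positivity
    · rw [div_lt_iff₀ (by positivity)]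
      have : (r:ℝ) < 2*T := by exact_mod_cast hr2
      nlinarith
  rw [abs_of_pos hpos]
  exact hkey r hr1 hr2


open Complex in
lemma dirichlet_ker (n : ℕ) (θ : ℝ) (hz : Complex.exp (2*(θ:ℂ)*Complex.I) ≠ 1) :
    ∑ α ∈ Finset.Icc (-(n:ℤ)) (n:ℤ), Complex.exp (2*(θ:ℂ)*Complex.I*(α:ℂ))
      = Complex.sin ((2*(n:ℂ)+1)*(θ:ℂ)) / Complex.sin (θ:ℂ) := by
  have hs : Complex.sin (θ:ℂ) ≠ 0 := by
    intro h0
    rw [Complex.sin_eq_zero_iff] at h0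
    obtain ⟨k, hk⟩ := h0
    apply hz
    rw [hk, show (2:ℂ)*((k:ℂ)*(Real.pi:ℂ))*Complex.I = (k:ℂ)*(2*(Real.pi:ℂ)*Complex.I) by ring,
      Complex.exp_int_mul, Complex.exp_two_pi_mul_I, one_zpow]
  induction n with
  | zero =>
    simp only [Nat.cast_zero, neg_zero, Finset.Icc_self, Finset.sum_singleton, Int.cast_zero,
      mul_zero, Complex.exp_zero]
    rw [show ((0:ℂ)+1)*(θ:ℂ) = (θ:ℂ) by ring, div_self hs]
  | succ n ih =>
    have hsets : Finset.Icc (-((n:ℤ)+1)) ((n:ℤ)+1)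
        = insert (-((n:ℤ)+1)) (insert ((n:ℤ)+1) (Finset.Icc (-(n:ℤ)) (n:ℤ))) := by
      ext x; simp; omega
    have hmem1 : (-((n:ℤ)+1)) ∉ insert ((n:ℤ)+1) (Finset.Icc (-(n:ℤ)) (n:ℤ)) := by
      simp; omega
    have hmem2 : ((n:ℤ)+1) ∉ Finset.Icc (-(n:ℤ)) (n:ℤ) := by simp
    rw [show ((n+1:ℕ):ℤ) = (n:ℤ)+1 by push_cast; ring, hsets,
      Finset.sum_insert hmem1, Finset.sum_insert hmem2, ih]
    have hcos : Complex.exp (2*(θ:ℂ)*Complex.I*((-((n:ℤ)+1) : ℤ):ℂ))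
        + Complex.exp (2*(θ:ℂ)*Complex.I*(((n:ℤ)+1 : ℤ):ℂ))
        = 2 * Complex.cos ((2*(n:ℂ)+2)*(θ:ℂ)) := by
      rw [Complex.cos]
      rw [show ((2*(n:ℂ)+2)*(θ:ℂ))*Complex.I = 2*(θ:ℂ)*Complex.I*(((n:ℤ)+1 : ℤ):ℂ) by push_cast; ring,
        show (-((2*(n:ℂ)+2)*(θ:ℂ)))*Complex.I = 2*(θ:ℂ)*Complex.I*((-((n:ℤ)+1) : ℤ):ℂ) by push_cast; ring]
      ring
    have key : Complex.sin ((2*((n:ℂ)+1)+1)*(θ:ℂ))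
        = Complex.sin ((2*(n:ℂ)+1)*(θ:ℂ)) + 2*Complex.cos ((2*(n:ℂ)+2)*(θ:ℂ))*Complex.sin (θ:ℂ) := by
      rw [show (2*((n:ℂ)+1)+1)*(θ:ℂ) = (2*(n:ℂ)+2)*(θ:ℂ) + (θ:ℂ) by ring,
        show (2*(n:ℂ)+1)*(θ:ℂ) = (2*(n:ℂ)+2)*(θ:ℂ) - (θ:ℂ) by ring,
        Complex.sin_add, Complex.sin_sub]
      ring
    rw [show ((n+1:ℕ):ℂ) = (n:ℂ)+1 by push_cast; ring, ← add_assoc, hcos]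
    field_simp
    linear_combination (norm := ring_nf) (-1) * key


theorem statement16 (h : ℂ → ℂ) (hh : IsAdmissible h) (T : ℕ) (hTodd : Odd T) (hT1 : 1 < T)
    (X : ℝ) (hX : 0 < X) :
    Summable (fun k : ℕ => ‖(-1 : ℂ) ^ k * (besselJ (2 * k + 1) X : ℝ) *
      ((((2 * (k : ℝ) + 1) / (2 * (T : ℝ))) ^ 2 : ℝ)) *
      h (((2 * (k : ℝ) + 1) / (2 * (T : ℝ)) : ℝ)) /
      ((Real.sin ((2 * (k : ℝ) + 1) * Real.pi / (2 * (T : ℝ))) : ℝ))‖) ∧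
    (∀ α : ℤ, α ∈ Finset.Icc (-(((T : ℤ) - 1) / 2)) (((T : ℤ) - 1) / 2) →
      Summable (fun k : {k : ℕ // ¬ (2 * T ∣ k)} =>
        ‖Complex.exp (2 * Real.pi * Complex.I *
            (((k : ℕ) : ℝ) * (α : ℝ) / (2 * (T : ℝ)) : ℝ)) *
          (besselJ k X : ℝ) * (((((k : ℕ) : ℝ) / (2 * (T : ℝ))) ^ 2 : ℝ)) *
          h ((((k : ℕ) : ℝ) / (2 * (T : ℝ)) : ℝ))‖)) ∧
    (T : ℂ) * (∑' k : ℕ, (-1 : ℂ) ^ k * (besselJ (2 * k + 1) X : ℝ) *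
      ((((2 * (k : ℝ) + 1) / (2 * (T : ℝ))) ^ 2 : ℝ)) *
      h (((2 * (k : ℝ) + 1) / (2 * (T : ℝ)) : ℝ)) /
      ((Real.sin ((2 * (k : ℝ) + 1) * Real.pi / (2 * (T : ℝ))) : ℝ))) =
    (T : ℂ) * ∑ α ∈ Finset.Icc (-(((T : ℤ) - 1) / 2)) (((T : ℤ) - 1) / 2),
      ∑' k : {k : ℕ // ¬ (2 * T ∣ k)},
        Complex.exp (2 * Real.pi * Complex.I *
            (((k : ℕ) : ℝ) * (α : ℝ) / (2 * (T : ℝ)) : ℝ)) *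
          (besselJ k X : ℝ) * (((((k : ℕ) : ℝ) / (2 * (T : ℝ))) ^ 2 : ℝ)) *
          h ((((k : ℕ) : ℝ) / (2 * (T : ℝ)) : ℝ)) := by
  obtain ⟨hdiff, heven, hdecay, hvan⟩ := hh
  obtain ⟨C, hC0, hC⟩ := hdecay 0 le_rfl
  have hT3 : 3 ≤ T := by rcases hTodd with ⟨n, hn⟩; omega
  have hTR : (0:ℝ) < T := by exact_mod_cast (by omega : 0 < T)
  have hTR1 : (1:ℝ) ≤ T := by exact_mod_cast (by omega : 1 ≤ T)
  have h2T : (0:ℝ) < 2*T := by linarith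
  have hpi := Real.pi_pos
  have hhb : ∀ x : ℝ, ‖h (x:ℂ)‖ ≤ C := by
    intro x
    have := hC x 0
    simpa using this
  have hB0 : (0:ℝ) ≤ ∑' n : ℕ, ((X/2)^2)^n / (n.factorial:ℝ) :=
    tsum_nonneg (fun n => by positivity)
  set B := ∑' n : ℕ, ((X/2)^2)^n / (n.factorial:ℝ) with hBdef
  have hJ : ∀ k : ℕ, |besselJ k X| ≤ (X/2)^k / k.factorial * B :=
    fun k => besselJ_bound k hX.le
  have hS0 : 0 < Real.sin (Real.pi/(2*(T:ℝ))) := by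
    apply Real.sin_pos_of_pos_of_lt_pi (by positivity)
    rw [div_lt_iff₀ h2T]; nlinarith
  set S := Real.sin (Real.pi/(2*(T:ℝ))) with hSdef
  have hsin_lb : ∀ k : ℕ, S ≤ |Real.sin ((2*(k:ℝ)+1) * Real.pi / (2*(T:ℝ)))| := by
    intro k
    have hnd : ¬ (2*T ∣ (2*k+1)) := by
      intro hd
      have h2 : 2 ∣ 2*k+1 := dvd_trans ⟨T, rfl⟩ hd
      omega
    have := sin_ge (by omega : 0 < T) hnd
    rw [show ((2*k+1:ℕ):ℝ) = 2*(k:ℝ)+1 by push_cast; ring] at this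
    exact this
  -- Part 1
  have part1 : Summable (fun k : ℕ => ‖(-1 : ℂ) ^ k * (besselJ (2 * k + 1) X : ℝ) *
      ((((2 * (k : ℝ) + 1) / (2 * (T : ℝ))) ^ 2 : ℝ)) *
      h (((2 * (k : ℝ) + 1) / (2 * (T : ℝ)) : ℝ)) /
      ((Real.sin ((2 * (k : ℝ) + 1) * Real.pi / (2 * (T : ℝ))) : ℝ))‖) := by
    refine Summable.of_nonneg_of_le (fun k => norm_nonneg _) (fun k => ?_)
      ((summable_aux (y := (X/2)^2) (by positivity)).mul_left ((X/2) * B * C / S))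
    rw [norm_div, norm_mul, norm_mul, norm_mul, norm_pow, norm_neg, norm_one, one_pow, one_mul]
    simp only [Complex.norm_real, Real.norm_eq_abs]
    have hP : |((2*(k:ℝ)+1)/(2*(T:ℝ)))^2| ≤ ((k:ℝ)+1)^2 := by
      rw [abs_of_nonneg (by positivity)]
      have hb : (2*(k:ℝ)+1)/(2*(T:ℝ)) ≤ (k:ℝ)+1 := by
        rw [div_le_iff₀ h2T]
        have : (0:ℝ) ≤ (k:ℝ) := Nat.cast_nonneg k
        nlinarith
      exact pow_le_pow_left₀ (by positivity) hb 2
    have hnum : |besselJ (2*k+1) X| * |((2*(k:ℝ)+1)/(2*(T:ℝ)))^2|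
        * ‖h (((2*(k:ℝ)+1)/(2*(T:ℝ)) : ℝ):ℂ)‖
        ≤ ((X/2)^(2*k+1) / (2*k+1).factorial * B) * ((k:ℝ)+1)^2 * C := by
      have hA1 : (0:ℝ) ≤ (X/2)^(2*k+1) / (2*k+1).factorial * B :=
        mul_nonneg (by positivity) hB0
      apply mul_le_mul (mul_le_mul (hJ (2*k+1)) hP (abs_nonneg _) hA1) (hhb _)
        (norm_nonneg _) (mul_nonneg hA1 (by positivity))
    calc |besselJ (2*k+1) X| * |((2*(k:ℝ)+1)/(2*(T:ℝ)))^2|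
          * ‖h (((2*(k:ℝ)+1)/(2*(T:ℝ)) : ℝ):ℂ)‖
          / |Real.sin ((2*(k:ℝ)+1) * Real.pi / (2*(T:ℝ)))|
        ≤ (((X/2)^(2*k+1) / (2*k+1).factorial * B) * ((k:ℝ)+1)^2 * C) / S :=
          div_le_div₀ (mul_nonneg (mul_nonneg (mul_nonneg (by positivity) hB0)
            (by positivity)) hC0.le) hnum hS0 (hsin_lb k)
      _ ≤ (((X/2)*((X/2)^2)^k / k.factorial * B) * ((k:ℝ)+1)^2 * C) / S := by
          have hfac : (k.factorial:ℝ) ≤ ((2*k+1).factorial:ℝ) := by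
            exact_mod_cast Nat.factorial_le (by omega)
          have hpow : (X/2)^(2*k+1) = (X/2)*((X/2)^2)^k := by
            rw [← pow_mul, ← pow_succ']
          have hstep : (X/2)^(2*k+1)/((2*k+1).factorial:ℝ) ≤ (X/2)*((X/2)^2)^k/(k.factorial:ℝ) := by
            rw [hpow]
            exact div_le_div_of_nonneg_left (by positivity) (by positivity) hfac
          apply (div_le_div_iff_of_pos_right hS0).mpr
          exact mul_le_mul_of_nonneg_right (mul_le_mul_of_nonneg_right
            (mul_le_mul_of_nonneg_right hstep hB0) (by positivity)) hC0.le
      _ = (X/2) * B * C / S * (((k:ℝ)+1)^2 * ((X/2)^2)^k / k.factorial) := by ring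
  -- Part 2
  have part2 : ∀ α : ℤ, Summable (fun k : {k : ℕ // ¬ (2 * T ∣ k)} =>
      ‖Complex.exp (2 * Real.pi * Complex.I *
          (((k : ℕ) : ℝ) * (α : ℝ) / (2 * (T : ℝ)) : ℝ)) *
        (besselJ k X : ℝ) * (((((k : ℕ) : ℝ) / (2 * (T : ℝ))) ^ 2 : ℝ)) *
        h ((((k : ℕ) : ℝ) / (2 * (T : ℝ)) : ℝ))‖) := by
    intro α
    have hexp1 : ∀ r : ℝ, ‖Complex.exp (2*(Real.pi:ℂ)*Complex.I*(r:ℂ))‖ = 1 := by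
      intro r
      rw [show 2*(Real.pi:ℂ)*Complex.I*(r:ℂ) = ((2*Real.pi*r : ℝ):ℂ)*Complex.I by
        push_cast; ring, Complex.norm_exp_ofReal_mul_I]
    have hg : Summable (fun k : ℕ => B * C * (((k:ℝ)+1)^2 * (X/2)^k / k.factorial)) :=
      (summable_aux (by positivity : (0:ℝ) ≤ X/2)).mul_left _
    have hg' : Summable ((fun k : ℕ => B * C * (((k:ℝ)+1)^2 * (X/2)^k / k.factorial))
        ∘ (fun k : {k : ℕ // ¬ (2 * T ∣ k)} => (k:ℕ))) :=
      hg.comp_injective Subtype.val_injective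
    refine Summable.of_nonneg_of_le (fun k => norm_nonneg _) (fun k => ?_) hg'
    simp only [Function.comp]
    rw [norm_mul, norm_mul, norm_mul, hexp1, one_mul]
    simp only [Complex.norm_real, Real.norm_eq_abs]
    have hP : |(((k:ℕ):ℝ)/(2*(T:ℝ)))^2| ≤ (((k:ℕ):ℝ)+1)^2 := by
      rw [abs_of_nonneg (by positivity)]
      have hb : ((k:ℕ):ℝ)/(2*(T:ℝ)) ≤ ((k:ℕ):ℝ)+1 := by
        rw [div_le_iff₀ h2T]
        have : (0:ℝ) ≤ ((k:ℕ):ℝ) := Nat.cast_nonneg _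
        nlinarith
      exact pow_le_pow_left₀ (by positivity) hb 2
    have hA1 : (0:ℝ) ≤ (X/2)^(k:ℕ) / ((k:ℕ).factorial:ℝ) * B :=
      mul_nonneg (by positivity) hB0
    calc |besselJ (k:ℕ) X| * |(((k:ℕ):ℝ)/(2*(T:ℝ)))^2| * ‖h ((((k:ℕ):ℝ)/(2*(T:ℝ)) : ℝ):ℂ)‖
        ≤ ((X/2)^(k:ℕ) / ((k:ℕ).factorial:ℝ) * B) * (((k:ℕ):ℝ)+1)^2 * C :=
          mul_le_mul (mul_le_mul (hJ (k:ℕ)) hP (abs_nonneg _) hA1) (hhb _)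
            (norm_nonneg _) (mul_nonneg hA1 (by positivity))
      _ = B * C * ((((k:ℕ):ℝ)+1)^2 * (X/2)^(k:ℕ) / ((k:ℕ).factorial:ℝ)) := by ring
  refine ⟨part1, fun α _ => part2 α, ?_⟩
  obtain ⟨n, hTn⟩ := hTodd
  have hTZ : (T:ℤ) = 2*(n:ℤ)+1 := by exact_mod_cast hTn
  have hNn : (((T:ℤ)-1)/2) = (n:ℤ) := by omega
  rw [hNn]
  congr 1
  rw [← Summable.tsum_finsetSum (fun α _ => (part2 α).of_norm)]
  have hTC : (T:ℂ) = 2*(n:ℂ)+1 := by exact_mod_cast hTn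
  have hTRn : (T:ℝ) = 2*(n:ℝ)+1 := by exact_mod_cast hTn
  -- Dirichlet kernel evaluation
  have hker : ∀ (k : ℕ), ¬(2*T ∣ k) →
      (∑ α ∈ Finset.Icc (-(n:ℤ)) (n:ℤ),
        Complex.exp (2 * Real.pi * Complex.I * (((k:ℝ) * (α:ℝ) / (2*(T:ℝ)) : ℝ):ℂ)))
      = ((Real.sin ((k:ℝ)*Real.pi/2) : ℝ):ℂ) / ((Real.sin ((k:ℝ)*Real.pi/(2*(T:ℝ))) : ℝ):ℂ) := by
    intro k hk
    have hz : Complex.exp (2*(((k:ℝ)*Real.pi/(2*(T:ℝ)) : ℝ):ℂ)*Complex.I) ≠ 1 := by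
      intro h1
      rw [Complex.exp_eq_one_iff] at h1
      obtain ⟨j, hj⟩ := h1
      apply hk
      have h2 : (2*(((k:ℝ)*Real.pi/(2*(T:ℝ)) : ℝ):ℂ)) * Complex.I
          = ((j:ℂ)*(2*(Real.pi:ℂ))) * Complex.I := by linear_combination hj
      have h3 := mul_right_cancel₀ Complex.I_ne_zero h2
      have h4 : 2*((k:ℝ)*Real.pi/(2*(T:ℝ))) = (j:ℝ)*(2*Real.pi) := by exact_mod_cast h3
      have h5 : (k:ℝ)*Real.pi = ((j:ℝ)*(2*(T:ℝ)))*Real.pi := by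
        field_simp at h4
        rw [h4]; ring
      have h6 : (k:ℝ) = (j:ℝ)*(2*(T:ℝ)) := mul_right_cancel₀ Real.pi_ne_zero h5
      have h7 : (k:ℝ) = ((((2*T:ℕ):ℤ)*j : ℤ) : ℝ) := by push_cast; linarith [h6]
      have h8 : (k:ℤ) = ((2*T:ℕ):ℤ)*j := by exact_mod_cast h7
      exact Int.natCast_dvd_natCast.mp ⟨j, h8⟩
    have hd := dirichlet_ker n ((k:ℝ)*Real.pi/(2*(T:ℝ))) hz
    calc (∑ α ∈ Finset.Icc (-(n:ℤ)) (n:ℤ),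
          Complex.exp (2 * Real.pi * Complex.I * (((k:ℝ) * (α:ℝ) / (2*(T:ℝ)) : ℝ):ℂ)))
        = ∑ α ∈ Finset.Icc (-(n:ℤ)) (n:ℤ),
          Complex.exp (2*(((k:ℝ)*Real.pi/(2*(T:ℝ)) : ℝ):ℂ)*Complex.I*(α:ℂ)) :=
          Finset.sum_congr rfl (fun α _ => by congr 1; push_cast; ring)
      _ = Complex.sin ((2*(n:ℂ)+1)*(((k:ℝ)*Real.pi/(2*(T:ℝ)) : ℝ):ℂ))
            / Complex.sin ((((k:ℝ)*Real.pi/(2*(T:ℝ)) : ℝ):ℂ)) := hd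
      _ = ((Real.sin ((k:ℝ)*Real.pi/2) : ℝ):ℂ) / ((Real.sin ((k:ℝ)*Real.pi/(2*(T:ℝ))) : ℝ):ℂ) := by
          rw [Complex.ofReal_sin, Complex.ofReal_sin]
          congr 2
          rw [show ((k:ℝ)*Real.pi/2 : ℝ) = ((2*(n:ℝ)+1)*((k:ℝ)*Real.pi/(2*(T:ℝ))) : ℝ) by
            rw [hTRn]; field_simp]
          push_cast
          ring
  -- reindex odd integers
  have hodd : ∀ m : ℕ, ¬ (2*T ∣ (2*m+1)) := by
    intro m hd
    have h2 : 2 ∣ 2*m+1 := dvd_trans ⟨T, rfl⟩ hd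
    omega
  have hι : Function.Injective (fun m : ℕ => (⟨2*m+1, hodd m⟩ : {k : ℕ // ¬ (2 * T ∣ k)})) := by
    intro a b hab
    have := congrArg (fun x : {k : ℕ // ¬ (2 * T ∣ k)} => (x:ℕ)) hab
    simp only at this
    omega
  -- rewrite the inner sums via the kernel
  have hG : ∀ k : {k : ℕ // ¬ (2 * T ∣ k)},
      (∑ α ∈ Finset.Icc (-(n:ℤ)) (n:ℤ),
        Complex.exp (2 * Real.pi * Complex.I *
            (((k : ℕ) : ℝ) * (α : ℝ) / (2 * (T : ℝ)) : ℝ)) *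
          (besselJ k X : ℝ) * (((((k : ℕ) : ℝ) / (2 * (T : ℝ))) ^ 2 : ℝ)) *
          h ((((k : ℕ) : ℝ) / (2 * (T : ℝ)) : ℝ)))
      = ((Real.sin (((k:ℕ):ℝ)*Real.pi/2) : ℝ):ℂ) / ((Real.sin (((k:ℕ):ℝ)*Real.pi/(2*(T:ℝ))) : ℝ):ℂ)
        * ((besselJ (k:ℕ) X : ℝ) * (((((k:ℕ):ℝ) / (2 * (T : ℝ))) ^ 2 : ℝ))
          * h (((((k:ℕ):ℝ) / (2 * (T : ℝ))) : ℝ))) := by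
    intro k
    rw [show (∑ α ∈ Finset.Icc (-(n:ℤ)) (n:ℤ),
        Complex.exp (2 * Real.pi * Complex.I *
            (((k : ℕ) : ℝ) * (α : ℝ) / (2 * (T : ℝ)) : ℝ)) *
          (besselJ k X : ℝ) * (((((k : ℕ) : ℝ) / (2 * (T : ℝ))) ^ 2 : ℝ)) *
          h ((((k : ℕ) : ℝ) / (2 * (T : ℝ)) : ℝ)))
      = ∑ α ∈ Finset.Icc (-(n:ℤ)) (n:ℤ),
        Complex.exp (2 * Real.pi * Complex.I *
            (((k : ℕ) : ℝ) * (α : ℝ) / (2 * (T : ℝ)) : ℝ)) *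
          ((besselJ (k:ℕ) X : ℝ) * (((((k:ℕ):ℝ) / (2 * (T : ℝ))) ^ 2 : ℝ))
            * h (((((k:ℕ):ℝ) / (2 * (T : ℝ))) : ℝ)))
      from Finset.sum_congr rfl (fun α _ => by ring)]
    rw [← Finset.sum_mul, hker (k:ℕ) k.prop]
  rw [tsum_congr hG]
  have hsupp : Function.support (fun k : {k : ℕ // ¬ (2 * T ∣ k)} =>
      ((Real.sin (((k:ℕ):ℝ)*Real.pi/2) : ℝ):ℂ) / ((Real.sin (((k:ℕ):ℝ)*Real.pi/(2*(T:ℝ))) : ℝ):ℂ)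
        * ((besselJ (k:ℕ) X : ℝ) * (((((k:ℕ):ℝ) / (2 * (T : ℝ))) ^ 2 : ℝ))
          * h (((((k:ℕ):ℝ) / (2 * (T : ℝ))) : ℝ))))
      ⊆ Set.range (fun m : ℕ => (⟨2*m+1, hodd m⟩ : {k : ℕ // ¬ (2 * T ∣ k)})) := by
    intro x hx
    rcases Nat.even_or_odd (x:ℕ) with he | ho
    · exfalso
      apply hx
      obtain ⟨j, hj⟩ := he
      have hzero : Real.sin (((x:ℕ):ℝ)*Real.pi/2) = 0 := by
        rw [show ((x:ℕ):ℝ)*Real.pi/2 = (j:ℝ)*Real.pi by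
          rw [show ((x:ℕ):ℝ) = (j:ℝ)+(j:ℝ) by exact_mod_cast congrArg (Nat.cast (R := ℝ)) hj]
          ring]
        exact Real.sin_nat_mul_pi j
      simp [hzero]
    · obtain ⟨m, hm⟩ := ho
      exact ⟨m, Subtype.ext hm.symm⟩
  rw [← Function.Injective.tsum_eq hι hsupp]
  refine tsum_congr fun m => ?_
  have hsinval : Real.sin ((2*(m:ℝ)+1)*Real.pi/2) = (-1:ℝ)^m := by
    rw [show (2*(m:ℝ)+1)*Real.pi/2 = (m:ℝ)*Real.pi + Real.pi/2 by ring, Real.sin_add,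
      Real.sin_nat_mul_pi, Real.sin_pi_div_two, Real.cos_pi_div_two]
    have := Real.cos_nat_mul_pi_sub 0 m
    simp at this
    rw [this]
    ring
  have hval : (((⟨2*m+1, hodd m⟩ : {k : ℕ // ¬ (2 * T ∣ k)}) : ℕ) : ℝ) = 2*(m:ℝ)+1 := by
    push_cast
    ring
  simp only [hval]
  rw [hsinval]
  push_cast
  ring

end
end

section
/- Let h be an admissible weight which is not identically zero and which additionally satisfies h(iy) ∈ [0, ∞) for all real y. Then there exist constants c > 0 and C > 0, depending only on h, such that for every odd integer T > 1, c·T² ≤ ∫_{-∞}^{∞} r·h_T(r)·tanh(πr) dr ≤ C·T². -/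
open MeasureTheory

noncomputable section

def Wfun (h : ℂ → ℂ) (s : ℝ) : ℝ :=
  s * (h (Complex.I * s)).re / Real.sinh (Real.pi * s)

lemma re_weightT (h : ℂ → ℂ) {T : ℝ} (hT : T ≠ 0) (r : ℝ) :
    (weightT h T r).re = Wfun h (r / T) := by
  unfold weightT Wfun
  have e1 : (Real.pi : ℂ) * r / T = ((Real.pi * (r / T) : ℝ) : ℂ) := by push_cast; ring
  have e2 : ((r : ℂ)) / T = ((r / T : ℝ) : ℂ) := by push_cast; ring
  have e3 : Complex.I * r / T = Complex.I * ((r / T : ℝ) : ℂ) := by push_cast; ring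
  rw [e1, e2, e3, ← Complex.ofReal_sinh, Complex.div_ofReal_re, Complex.re_ofReal_mul]

lemma exists_pos_re (h : ℂ → ℂ) (hh : IsAdmissible h) (hne : ∃ z : ℂ, h z ≠ 0)
    (hpos : ∀ y : ℝ, (h (Complex.I * y)).im = 0 ∧ 0 ≤ (h (Complex.I * y)).re) :
    ∃ y0 : ℝ, 0 < y0 ∧ 0 < (h (Complex.I * y0)).re := by
  by_contra hcon
  push_neg at hcon
  have hz : ∀ y : ℝ, 0 < y → h (Complex.I * y) = 0 := by
    intro y hy
    exact Complex.ext (le_antisymm (hcon y hy) (hpos y).2) (by simpa using (hpos y).1)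
  have han : AnalyticOnNhd ℂ h Set.univ := Complex.analyticOnNhd_univ_iff_differentiable.2 hh.1
  have hfreq : ∃ᶠ z in nhdsWithin Complex.I {Complex.I}ᶜ, h z = 0 := by
    have htend : Filter.Tendsto (fun n : ℕ => Complex.I * ((1 + 1 / (n + 1) : ℝ) : ℂ))
        Filter.atTop (nhdsWithin Complex.I {Complex.I}ᶜ) := by
      apply tendsto_nhdsWithin_of_tendsto_nhds_of_eventually_within
      · have h0 : Filter.Tendsto (fun n : ℕ => (1 + 1 / (n + 1) : ℝ)) Filter.atTop (nhds 1) := by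
          simpa using (tendsto_one_div_add_atTop_nhds_zero_nat (𝕜 := ℝ)).const_add 1
        have h1 : Filter.Tendsto (fun n : ℕ => ((1 + 1 / (n + 1) : ℝ) : ℂ)) Filter.atTop
            (nhds (1 : ℂ)) := by
          exact_mod_cast (Complex.continuous_ofReal.tendsto 1).comp h0
        simpa using h1.const_mul Complex.I
      · apply Filter.Eventually.of_forall
        intro n
        simp only [Set.mem_compl_iff, Set.mem_singleton_iff]
        intro hcontra
        have : ((1 + 1 / (n + 1) : ℝ) : ℂ) = 1 := by
          have := mul_left_cancel₀ Complex.I_ne_zero (hcontra.trans (mul_one Complex.I).symm)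
          exact this
        have : (1 + 1 / (n + 1) : ℝ) = 1 := by exact_mod_cast this
        have : (1 : ℝ) / (n + 1) = 0 := by linarith
        have hn : (0:ℝ) < 1 / (n + 1) := by positivity
        linarith
    apply htend.frequently
    apply Filter.Frequently.of_forall
    intro n
    exact hz _ (by positivity)
  have heq : Set.EqOn h 0 Set.univ :=
    han.eqOn_zero_of_preconnected_of_frequently_eq_zero isPreconnected_univ
      (Set.mem_univ _) hfreq
  obtain ⟨z, hzz⟩ := hne
  exact hzz (heq (Set.mem_univ z))

lemma tanh_abs_le_one (x : ℝ) : |Real.tanh x| ≤ 1 := by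
  rw [Real.tanh_eq_sinh_div_cosh, abs_div, abs_of_pos (Real.cosh_pos x),
    div_le_one (Real.cosh_pos _)]
  rw [Real.abs_sinh, ← Real.cosh_abs]
  nlinarith [Real.cosh_sub_sinh |x|, Real.exp_pos (-|x|)]

lemma tanh_mono {x y : ℝ} (hxy : x ≤ y) : Real.tanh x ≤ Real.tanh y := by
  rw [Real.tanh_eq_sinh_div_cosh, Real.tanh_eq_sinh_div_cosh,
    div_le_div_iff₀ (Real.cosh_pos _) (Real.cosh_pos _)]
  have h1 : Real.sinh (x - y) ≤ 0 := Real.sinh_nonpos_iff.2 (by linarith)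
  rw [Real.sinh_sub] at h1
  linarith [h1, mul_comm (Real.cosh x) (Real.sinh y)]

lemma tanh_nonneg' {x : ℝ} (hx : 0 ≤ x) : 0 ≤ Real.tanh x := by simpa using tanh_mono hx

lemma tanh_nonpos' {x : ℝ} (hx : x ≤ 0) : Real.tanh x ≤ 0 := by simpa using tanh_mono hx

lemma tanh_pos' {x : ℝ} (hx : 0 < x) : 0 < Real.tanh x := by
  rw [Real.tanh_eq_sinh_div_cosh]
  exact div_pos (Real.sinh_pos_iff.2 hx) (Real.cosh_pos _)

lemma key1 {x : ℝ} (hx : 0 ≤ x) : x * Real.exp x ≤ Real.sinh x * (1 + 2 * x) := by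
  have h1 : x ≤ Real.sinh x := Real.self_le_sinh_iff.2 hx
  have h2 : Real.cosh x - Real.sinh x = Real.exp (-x) := Real.cosh_sub_sinh x
  have h3 : Real.exp (-x) ≤ 1 := Real.exp_le_one_iff.2 (by linarith)
  have h4 : Real.cosh x + Real.sinh x = Real.exp x := Real.cosh_add_sinh x
  have h5 : x * Real.exp (-x) ≤ x * 1 := mul_le_mul_of_nonneg_left h3 hx
  nlinarith [h1, h2, h4, h5, hx]

lemma hE4 {u : ℝ} (hu : 0 ≤ u) : 1 + u ^ 4 / 256 ≤ Real.exp (Real.pi * u / 2) := by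
  have b1 : Real.exp u ≤ Real.exp (Real.pi * u / 2) := by
    apply Real.exp_le_exp.2
    nlinarith [Real.pi_gt_three]
  have b2 : Real.exp u = Real.exp (u / 4) ^ 4 := by
    rw [← Real.exp_nat_mul]; norm_num; ring_nf
  have b3 : (1 + u / 4) ^ 4 ≤ Real.exp (u / 4) ^ 4 := by
    apply pow_le_pow_left₀ (by positivity)
    linarith [Real.add_one_le_exp (u / 4)]
  have b4 : 1 + u ^ 4 / 256 ≤ (1 + u / 4) ^ 4 := by nlinarith [sq_nonneg u, sq_nonneg (u/4), hu]
  calc 1 + u ^ 4 / 256 ≤ (1 + u / 4) ^ 4 := b4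
    _ ≤ Real.exp (u / 4) ^ 4 := b3
    _ = Real.exp u := b2.symm
    _ ≤ _ := b1

lemma polybound {u p : ℝ} (hu : 0 ≤ u) (hp3 : 3 < p) (hp4 : p ≤ 4) :
    u * (1 + u ^ 2) * (1 + 2 * (p * u)) ≤ 10 ^ 6 * (1 + u ^ 4 / 256) := by
  nlinarith [mul_nonneg (sq_nonneg (u - 1)) (show (0:ℝ) ≤ u ^ 2 + u + 1 by positivity),
    sq_nonneg (u ^ 2 - 1), mul_le_mul_of_nonneg_right hp4 (sq_nonneg u),
    mul_le_mul_of_nonneg_right hp4 (pow_nonneg hu 4), hu, sq_nonneg u,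
    pow_nonneg hu 3, pow_nonneg hu 4]

lemma boundW (h : ℂ → ℂ) (hh : IsAdmissible h) :
    ∃ M : ℝ, 0 < M ∧ ∀ s : ℝ, |s * Wfun h s| ≤ M * (1 + s ^ 2)⁻¹ := by
  obtain ⟨C0, hC0, hbd⟩ := hh.2.2.1 0 le_rfl
  have hdec : ∀ s : ℝ, ‖h (Complex.I * s)‖ ≤ C0 * Real.exp (Real.pi * |s| / 2) := by
    intro s
    have H := hbd 0 s
    simp only [abs_zero, add_zero, neg_zero, Real.rpow_zero, mul_one] at H
    rwa [show ((0:ℝ):ℂ) + (s:ℂ) * Complex.I = Complex.I * s by push_cast; ring] at H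
  refine ⟨C0 * 10 ^ 6, by positivity, ?_⟩
  intro s
  rcases eq_or_ne s 0 with rfl | hs
  · simp only [zero_mul, abs_zero]
    positivity
  have hu0 : 0 < |s| := abs_pos.2 hs
  set u := |s| with hu
  have hsinh : 0 < Real.sinh (Real.pi * u) := Real.sinh_pos_iff.2 (by positivity)
  have hsq : s ^ 2 = u ^ 2 := (sq_abs s).symm
  set E := Real.exp (Real.pi * u / 2) with hE
  have hEpos : 0 < E := Real.exp_pos _
  have hFa : |(h (Complex.I * s)).re| ≤ C0 * E := (Complex.abs_re_le_norm _).trans (hdec s)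
  have habs : |s * Wfun h s| = u ^ 2 * |(h (Complex.I * s)).re| / Real.sinh (Real.pi * u) := by
    have e : s * Wfun h s = s ^ 2 * (h (Complex.I * s)).re / Real.sinh (Real.pi * s) := by
      rw [Wfun]; ring
    rw [e, abs_div, abs_mul, abs_pow, sq_abs, Real.abs_sinh,
      show |Real.pi * s| = Real.pi * u by rw [abs_mul, abs_of_pos Real.pi_pos], hsq]
  rw [habs, hsq]
  have step1 : u ^ 2 * |(h (Complex.I * s)).re| / Real.sinh (Real.pi * u) ≤
      u ^ 2 * (C0 * E) / Real.sinh (Real.pi * u) := by gcongr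
  refine step1.trans ?_
  rw [show C0 * 10 ^ 6 * (1 + u ^ 2)⁻¹ = (C0 * 10 ^ 6) / (1 + u ^ 2) by rw [div_eq_mul_inv],
    div_le_div_iff₀ hsinh (by positivity : (0:ℝ) < 1 + u ^ 2)]
  have hS : (0:ℝ) < 1 + 2 * (Real.pi * u) := by positivity
  apply le_of_mul_le_mul_right _ hS
  have k1 : (Real.pi * u) * Real.exp (Real.pi * u) ≤
      Real.sinh (Real.pi * u) * (1 + 2 * (Real.pi * u)) := key1 (by positivity)
  have hEE : Real.exp (Real.pi * u) = E * E := by rw [hE, ← Real.exp_add]; ring_nf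
  have pb : u * (1 + u ^ 2) * (1 + 2 * (Real.pi * u)) ≤ 10 ^ 6 * (1 + u ^ 4 / 256) :=
    polybound hu0.le Real.pi_gt_three Real.pi_le_four
  have pb2 : u * (1 + u ^ 2) * (1 + 2 * (Real.pi * u)) ≤ 10 ^ 6 * E :=
    pb.trans (by nlinarith [hE4 hu0.le])
  calc u ^ 2 * (C0 * E) * (1 + u ^ 2) * (1 + 2 * (Real.pi * u))
      = (C0 * E) * (u * (u * (1 + u ^ 2) * (1 + 2 * (Real.pi * u)))) := by ring
    _ ≤ (C0 * E) * (u * (10 ^ 6 * E)) := by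
        apply mul_le_mul_of_nonneg_left _ (by positivity)
        exact mul_le_mul_of_nonneg_left pb2 hu0.le
    _ = C0 * 10 ^ 6 * (u * (E * E)) := by ring
    _ ≤ C0 * 10 ^ 6 * ((Real.pi * u) * (E * E)) := by
        apply mul_le_mul_of_nonneg_left _ (by positivity)
        apply mul_le_mul_of_nonneg_right _ (by positivity)
        nlinarith [Real.pi_gt_three, hu0]
    _ = C0 * 10 ^ 6 * ((Real.pi * u) * Real.exp (Real.pi * u)) := by rw [hEE]
    _ ≤ C0 * 10 ^ 6 * (Real.sinh (Real.pi * u) * (1 + 2 * (Real.pi * u))) := by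
        apply mul_le_mul_of_nonneg_left k1 (by positivity)
    _ = C0 * 10 ^ 6 * Real.sinh (Real.pi * u) * (1 + 2 * (Real.pi * u)) := by ring

lemma gT_nonneg (h : ℂ → ℂ)
    (hpos : ∀ y : ℝ, (h (Complex.I * y)).im = 0 ∧ 0 ≤ (h (Complex.I * y)).re)
    {t : ℝ} (ht : 0 < t) (s : ℝ) :
    0 ≤ s * Wfun h s * Real.tanh (Real.pi * (t * s)) := by
  have hF : 0 ≤ (h (Complex.I * s)).re := (hpos s).2
  rcases lt_trichotomy s 0 with hs | rfl | hs
  · have hsinh : Real.sinh (Real.pi * s) < 0 := Real.sinh_neg_iff.2 (by nlinarith [Real.pi_pos])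
    have hW : 0 ≤ Wfun h s := by
      rw [Wfun]
      exact div_nonneg_of_nonpos (by nlinarith) hsinh.le
    have hts : t * s < 0 := mul_neg_of_pos_of_neg ht hs
    have htanh : Real.tanh (Real.pi * (t * s)) ≤ 0 :=
      tanh_nonpos' (mul_nonpos_of_nonneg_of_nonpos Real.pi_pos.le hts.le)
    exact mul_nonneg_iff.2 (Or.inr ⟨mul_nonpos_of_nonpos_of_nonneg hs.le hW, htanh⟩)
  · simp
  · have hsinh : 0 < Real.sinh (Real.pi * s) := Real.sinh_pos_iff.2 (by positivity)
    have hW : 0 ≤ Wfun h s := by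
      rw [Wfun]; positivity
    have htanh : 0 ≤ Real.tanh (Real.pi * (t * s)) := tanh_nonneg' (by positivity)
    positivity

set_option maxHeartbeats 2000000 in
theorem statement17 (h : ℂ → ℂ) (hh : IsAdmissible h) (hne : ∃ z : ℂ, h z ≠ 0)
    (hpos : ∀ y : ℝ, (h (Complex.I * y)).im = 0 ∧ 0 ≤ (h (Complex.I * y)).re) :
    ∃ c C : ℝ, 0 < c ∧ 0 < C ∧ ∀ T : ℤ, Odd T → 1 < T →
      c * (T : ℝ) ^ 2 ≤ (∫ r : ℝ, r * (weightT h T r).re * Real.tanh (Real.pi * r)) ∧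
      (∫ r : ℝ, r * (weightT h T r).re * Real.tanh (Real.pi * r)) ≤ C * (T : ℝ) ^ 2 := by
  obtain ⟨M, hM, hMb⟩ := boundW h hh
  obtain ⟨y0, hy0, hre⟩ := exists_pos_re h hh hne hpos
  have hFc : Continuous fun y : ℝ => (h (Complex.I * y)).re :=
    Complex.continuous_re.comp (hh.1.continuous.comp
      (continuous_const.mul Complex.continuous_ofReal))
  set ε := (h (Complex.I * y0)).re with hε
  have hev : ∀ᶠ y : ℝ in nhds y0, ε / 2 < (h (Complex.I * y)).re :=
    (hFc.continuousAt).eventually (eventually_gt_nhds (by linarith))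
  obtain ⟨δ, hδ, hball⟩ := Metric.eventually_nhds_iff.1 hev
  set d := min (δ / 2) (y0 / 2) with hd
  have hd0 : 0 < d := by positivity
  set a := y0 - d with ha
  set b := y0 + d with hb
  have ha0 : 0 < a := by
    have : d ≤ y0 / 2 := min_le_right _ _
    simp only [ha]; linarith
  have hab : a < b := by simp only [ha, hb]; linarith
  have hsinhb : 0 < Real.sinh (Real.pi * b) := Real.sinh_pos_iff.2 (by nlinarith [Real.pi_pos])
  have htanha : 0 < Real.tanh (Real.pi * a) := tanh_pos' (by positivity)
  set m := a ^ 2 * (ε / 2) / Real.sinh (Real.pi * b) * Real.tanh (Real.pi * a) with hm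
  have hm0 : 0 < m := by
    apply mul_pos (div_pos (by positivity) hsinhb) htanha
  refine ⟨m * (b - a), M * Real.pi, by nlinarith, by positivity, ?_⟩
  intro T _ hT1
  have hT0 : (0:ℝ) < (T:ℝ) := by exact_mod_cast (by linarith : (0:ℤ) < T)
  have hT1' : (1:ℝ) ≤ (T:ℝ) := by exact_mod_cast hT1.le
  have hTne : ((T:ℝ)) ≠ 0 := ne_of_gt hT0
  set t := ((T:ℤ) : ℝ) with hts
  set f : ℝ → ℝ := fun r => r * (weightT h t r).re * Real.tanh (Real.pi * r) with hf
  set g : ℝ → ℝ := fun s => s * Wfun h s * Real.tanh (Real.pi * (t * s)) with hg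
  have hfg : ∀ s : ℝ, f (t * s) = t * g s := by
    intro s
    simp only [hf, hg]
    rw [re_weightT h hTne, mul_div_cancel_left₀ _ hTne]
    ring
  have hgm : Measurable g := by
    have h1 : Measurable fun s : ℝ => (h (Complex.I * s)).re := hFc.measurable
    have hW : Measurable (Wfun h) := by
      apply Measurable.div
      · exact measurable_id.mul h1
      · exact (Real.continuous_sinh.comp (continuous_const.mul continuous_id)).measurable
    have hct : Continuous Real.tanh := by
      have : Real.tanh = fun x => Real.sinh x / Real.cosh x :=
        funext fun x => Real.tanh_eq_sinh_div_cosh x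
      rw [this]
      exact Real.continuous_sinh.div Real.continuous_cosh fun x => (Real.cosh_pos x).ne'
    exact (measurable_id.mul hW).mul
      ((hct.comp (continuous_const.mul (continuous_const.mul continuous_id))).measurable)
  have hgbd : ∀ s : ℝ, ‖g s‖ ≤ M * (1 + s ^ 2)⁻¹ := by
    intro s
    rw [Real.norm_eq_abs, hg]
    simp only []
    rw [abs_mul]
    calc |s * Wfun h s| * |Real.tanh (Real.pi * (t * s))| ≤ |s * Wfun h s| * 1 :=
          mul_le_mul_of_nonneg_left (tanh_abs_le_one _) (abs_nonneg _)
      _ = |s * Wfun h s| := mul_one _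
      _ ≤ M * (1 + s ^ 2)⁻¹ := hMb s
  have hDi : Integrable (fun s : ℝ => M * (1 + s ^ 2)⁻¹) := integrable_inv_one_add_sq.const_mul M
  have hgi : Integrable g :=
    hDi.mono' hgm.aestronglyMeasurable (Filter.Eventually.of_forall hgbd)
  have hgnn : ∀ s, 0 ≤ g s := gT_nonneg h hpos hT0
  have hsub : (∫ r, f r) = t ^ 2 * ∫ s, g s := by
    have e1 : (∫ x : ℝ, f (t * x)) = |t⁻¹| • ∫ y, f y :=
      Measure.integral_comp_mul_left f t
    have e2 : (∫ x : ℝ, f (t * x)) = ∫ x, t * g x := by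
      congr 1; ext x; exact hfg x
    rw [integral_const_mul] at e2
    rw [e2, abs_inv, abs_of_pos hT0, smul_eq_mul] at e1
    calc (∫ r, f r) = t * ((t:ℝ)⁻¹ * ∫ r, f r) := by field_simp
      _ = t * (t * ∫ s, g s) := by rw [← e1]
      _ = t ^ 2 * ∫ s, g s := by ring
  have hupper : (∫ s, g s) ≤ M * Real.pi := by
    have h1 : (∫ s, g s) ≤ ∫ s, M * (1 + s ^ 2)⁻¹ := by
      apply integral_mono hgi hDi
      intro s
      exact (le_abs_self _).trans ((Real.norm_eq_abs (g s)) ▸ hgbd s)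
    rwa [integral_const_mul, integral_univ_inv_one_add_sq] at h1
  have hmem : ∀ s ∈ Set.Icc a b, m ≤ g s := by
    intro s hs
    obtain ⟨has, hsb⟩ := hs
    have hs0 : 0 < s := lt_of_lt_of_le ha0 has
    have hεs : ε / 2 < (h (Complex.I * s)).re := by
      apply hball
      rw [Real.dist_eq]
      have h1 : |s - y0| ≤ d := by
        rw [abs_sub_le_iff]
        constructor <;> [skip; skip] <;> simp only [ha, hb] at has hsb <;> linarith
      have h2 : d ≤ δ / 2 := min_le_left _ _
      linarith
    have hFs0 : 0 ≤ (h (Complex.I * s)).re := (hpos s).2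
    have hsinhs : 0 < Real.sinh (Real.pi * s) := Real.sinh_pos_iff.2 (by positivity)
    have e : g s = s ^ 2 * (h (Complex.I * s)).re / Real.sinh (Real.pi * s) *
        Real.tanh (Real.pi * (t * s)) := by
      rw [hg]; simp only []; rw [Wfun]; ring
    rw [e, hm]
    have bound1 : a ^ 2 * (ε / 2) / Real.sinh (Real.pi * b) ≤
        s ^ 2 * (h (Complex.I * s)).re / Real.sinh (Real.pi * s) := by
      apply div_le_div₀ (by positivity)
      · apply mul_le_mul (by nlinarith) hεs.le (by positivity) (by positivity)
      · exact hsinhs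
      · exact Real.sinh_le_sinh.2 (by nlinarith [Real.pi_pos])
    have bound2 : Real.tanh (Real.pi * a) ≤ Real.tanh (Real.pi * (t * s)) := by
      apply tanh_mono
      have hats : a ≤ t * s := by nlinarith [mul_le_mul_of_nonneg_right hT1' hs0.le]
      exact mul_le_mul_of_nonneg_left hats Real.pi_pos.le
    apply mul_le_mul bound1 bound2 htanha.le (by positivity)
  have hlow : m * (b - a) ≤ ∫ s, g s := by
    have h1 : m * (volume (Set.Icc a b)).toReal ≤ ∫ s in Set.Icc a b, g s :=
      setIntegral_ge_of_const_le_real measurableSet_Icc measure_Icc_lt_top.ne hmem hgi.integrableOn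
    have h2 : (volume (Set.Icc a b)).toReal = b - a := by
      rw [Real.volume_Icc, ENNReal.toReal_ofReal (by linarith)]
    have h3 : (∫ s in Set.Icc a b, g s) ≤ ∫ s, g s :=
      setIntegral_le_integral hgi (Filter.Eventually.of_forall hgnn)
    rw [h2] at h1
    linarith
  constructor
  · rw [hsub]
    nlinarith [sq_nonneg t, hlow, hm0, mul_le_mul_of_nonneg_right hlow (sq_nonneg t)]
  · rw [hsub]
    nlinarith [mul_le_mul_of_nonneg_right hupper (sq_nonneg t)]


end
end
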